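/- Let P be a finite poset with n elements and let I be an order ideal of P. Then the collection ℬ_{P,I} of I-sets of all linear extensions of P is a shifted family: if B ∈ ℬ_{P,I} and a < b are positive integers with a ∉ B and b ∈ B, then (B \ {b}) ∪ {a} ∈ ℬ_{P,I}. -/
import Mathlib


/-- `f` is a linear extension of the finite poset `P` (with `n` elements), viewed as a
bijection from `P` onto `{1, …, n}` such that `x <_P y` implies `f x < f y`. -/
def IsLinearExtension {P : Type} [PartialOrder P] (n : ℕ) (f : P → ℕ) : Prop :=
  Set.BijOn f Set.univ (Set.Icc 1 n) ∧ ∀ x y : P, x < y → f x < f y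

/-- Adjacent swap step: if `c ∉ f '' I` and `c + 1 ∈ f '' I`, we can swap the values
`c` and `c+1`. -/
lemma swap_step {P : Type} [PartialOrder P] (n : ℕ) (I : Set P)
    (hI : ∀ x y : P, x ≤ y → y ∈ I → x ∈ I)
    (f : P → ℕ) (hf : IsLinearExtension n f) (c : ℕ) (hc1 : 1 ≤ c)
    (hcB : c ∉ f '' I) (hc1B : c + 1 ∈ f '' I) :
    ∃ g : P → ℕ, IsLinearExtension n g ∧ g '' I = insert c (f '' I \ {c + 1}) := by
  obtain ⟨hbij, hmono⟩ := hf
  obtain ⟨y, hyI, hyc⟩ := hc1B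
  have hy_mem : c + 1 ∈ Set.Icc 1 n := hyc ▸ hbij.mapsTo (Set.mem_univ y)
  have hc_mem : c ∈ Set.Icc 1 n := by
    simp only [Set.mem_Icc] at hy_mem ⊢; omega
  set σ := Equiv.swap c (c + 1) with hσdef
  have hσ_apply : ∀ d : ℕ, σ d = if d = c then c + 1 else if d = c + 1 then c else d := by
    intro d; simp [hσdef, Equiv.swap_apply_def]
  have hσ_bij : Set.BijOn σ (Set.Icc 1 n) (Set.Icc 1 n) := by
    refine ⟨?_, (Equiv.injective σ).injOn, ?_⟩
    · intro d hd
      rw [hσ_apply]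
      split_ifs with h1 h2
      · exact hy_mem
      · exact hc_mem
      · exact hd
    · intro d hd
      refine ⟨σ d, ?_, ?_⟩
      · rw [hσ_apply]
        split_ifs with h1 h2
        · exact hy_mem
        · exact hc_mem
        · exact hd
      · simp [hσdef, Equiv.swap_apply_self]
  have key : ∀ d e : ℕ, d < e → (d ≠ c ∨ e ≠ c + 1) → σ d < σ e := by
    intro d e hde h
    rw [hσ_apply, hσ_apply]
    split_ifs <;> omega
  refine ⟨σ ∘ f, ⟨hσ_bij.comp hbij, ?_⟩, ?_⟩
  · intro u v huv
    apply key _ _ (hmono u v huv)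
    by_contra h
    push_neg at h
    obtain ⟨h1, h2⟩ := h
    have hvy : v = y := hbij.injOn (Set.mem_univ v) (Set.mem_univ y) (h2.trans hyc.symm)
    exact hcB ⟨u, hI u v (le_of_lt huv) (hvy ▸ hyI), h1⟩
  · ext d
    simp only [Set.image_comp, Set.mem_insert_iff, Set.mem_diff, Set.mem_singleton_iff]
    constructor
    · rintro ⟨e, heB, rfl⟩
      have hec : e ≠ c := fun h => hcB (h ▸ heB)
      by_cases he1 : e = c + 1
      · left
        rw [hσ_apply, if_neg hec, if_pos he1]
      · right
        rw [hσ_apply]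
        simp only [if_neg hec, if_neg he1]
        exact ⟨heB, he1⟩
    · rintro (h | ⟨hdB, hd1⟩)
      · refine ⟨c + 1, ⟨y, hyI, hyc⟩, ?_⟩
        rw [hσ_apply, if_neg (by omega), if_pos rfl]
        exact h.symm
      · have hdc : d ≠ c := fun h => hcB (h ▸ hdB)
        refine ⟨d, hdB, ?_⟩
        rw [hσ_apply, if_neg hdc, if_neg hd1]

lemma main_aux {P : Type} [PartialOrder P] (n : ℕ) (I : Set P)
    (hI : ∀ x y : P, x ≤ y → y ∈ I → x ∈ I) :
    ∀ k a b : ℕ, b - a ≤ k → 0 < a → a < b → ∀ f : P → ℕ, IsLinearExtension n f →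
      a ∉ f '' I → b ∈ f '' I →
      ∃ g : P → ℕ, IsLinearExtension n g ∧ g '' I = insert a (f '' I \ {b}) := by
  intro k
  induction k with
  | zero => intro a b hk ha hab; omega
  | succ k ih =>
    intro a b hk ha hab f hf haB hbB
    by_cases hb : b = a + 1
    · subst hb
      exact swap_step n I hI f hf a ha haB hbB
    · have h1 : a < b - 1 := by omega
      have hbb : b - 1 + 1 = b := by omega
      have hk' : b - 1 - a ≤ k := by omega
      have hone : 1 ≤ b - 1 := by omega
      by_cases hb1 : b - 1 ∈ f '' I
      · obtain ⟨g, hg, hgI⟩ := ih a (b - 1) hk' ha h1 f hf haB hb1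
        have hbg : b ∈ g '' I := by
          rw [hgI]
          exact Or.inr ⟨hbB, by simp only [Set.mem_singleton_iff]; omega⟩
        have hb1g : b - 1 ∉ g '' I := by
          rw [hgI]
          rintro (h | ⟨_, h⟩)
          · omega
          · exact h rfl
        obtain ⟨g', hg', hg'I⟩ := swap_step n I hI g hg (b - 1) hone hb1g
          (by rw [hbb]; exact hbg)
        refine ⟨g', hg', ?_⟩
        rw [hg'I, hgI, hbb]
        ext d
        simp only [Set.mem_insert_iff, Set.mem_diff, Set.mem_singleton_iff]
        constructor
        · rintro (rfl | ⟨(rfl | ⟨hdS, hdb1⟩), hdb⟩)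
          · exact Or.inr ⟨hb1, by omega⟩
          · exact Or.inl rfl
          · exact Or.inr ⟨hdS, hdb⟩
        · rintro (rfl | ⟨hdS, hdb⟩)
          · exact Or.inr ⟨Or.inl rfl, by omega⟩
          · by_cases hdb1 : d = b - 1
            · exact Or.inl hdb1
            · exact Or.inr ⟨Or.inr ⟨hdS, hdb1⟩, hdb⟩
      · obtain ⟨g, hg, hgI⟩ := swap_step n I hI f hf (b - 1) hone hb1
          (by rw [hbb]; exact hbB)
        rw [hbb] at hgI
        have h1g : b - 1 ∈ g '' I := by rw [hgI]; exact Or.inl rfl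
        have hag : a ∉ g '' I := by
          rw [hgI]
          rintro (h | ⟨h, _⟩)
          · omega
          · exact haB h
        obtain ⟨g', hg', hg'I⟩ := ih a (b - 1) hk' ha h1 g hg hag h1g
        refine ⟨g', hg', ?_⟩
        rw [hg'I, hgI]
        ext d
        simp only [Set.mem_insert_iff, Set.mem_diff, Set.mem_singleton_iff]
        constructor
        · rintro (rfl | ⟨(rfl | ⟨hdS, hdb⟩), hdb1⟩)
          · exact Or.inl rfl
          · exact absurd rfl hdb1
          · exact Or.inr ⟨hdS, hdb⟩
        · rintro (rfl | ⟨hdS, hdb⟩)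
          · exact Or.inl rfl
          · exact Or.inr ⟨Or.inr ⟨hdS, hdb⟩, fun h => hb1 (h ▸ hdS)⟩

/-- For a finite poset `P` with `n` elements and an order ideal `I` of `P`, the
collection of `I`-sets of linear extensions of `P` is a shifted family: if `B` is the
`I`-set of a linear extension and `a < b` are positive integers with `a ∉ B`, `b ∈ B`,
then `(B \ {b}) ∪ {a}` is also the `I`-set of a linear extension. -/
theorem ideal_sets_shifted {P : Type} [Fintype P] [PartialOrder P] (n : ℕ)
    (hn : Fintype.card P = n) (I : Set P) (hI : ∀ x y : P, x ≤ y → y ∈ I → x ∈ I)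
    (B : Set ℕ) (f : P → ℕ) (hf : IsLinearExtension n f) (hfB : f '' I = B)
    (a b : ℕ) (hab : a < b) (ha : 0 < a) (haB : a ∉ B) (hbB : b ∈ B) :
    ∃ g : P → ℕ, IsLinearExtension n g ∧ g '' I = insert a (B \ {b}) := by
  subst hfB
  exact main_aux n I hI (b - a) a b le_rfl ha hab f hf haB hbB
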